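/- For the measure of maximal entropy μ (the (1/2,1/2)-Bernoulli measure) on {0,1}^ℕ, the functions β_n defined by: β_1 = 1_{[0]} - 1_{[1]}, and for n ≥ 2, β_n(y) = α_n(y) for y ∈ [0] and β_n(y) = -α_n(𝔖(y)) for y ∈ [1] — where α_n takes value +1 on cylinders of length n in even position and -1 on cylinders in odd position of the lexicographic order — satisfy L_{-log 2}(β_n) = 0 for all n ≥ 1, have L²(μ)-norm 1, and are pairwise orthogonal: ∫ β_n β_m dμ = 0 for n ≠ m. -/

import Mathlib

open MeasureTheory Real Filter

abbrev Omega (d : ℕ) := ℕ → Fin d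

def shift {d : ℕ} (x : Omega d) : Omega d := fun n => x (n + 1)

def cons {d : ℕ} (a : Fin d) (x : Omega d) : Omega d := fun n =>
  match n with
  | 0 => a
  | Nat.succ k => x k

def Ruelle {d : ℕ} (J : Omega d → ℝ) (f : Omega d → ℝ) (x : Omega d) : ℝ :=
  ∑ a : Fin d, J (cons a x) * f (cons a x)

def IsJacobian {d : ℕ} (J : Omega d → ℝ) : Prop :=
  Continuous J ∧ (∀ x, 0 < J x ∧ J x < 1) ∧ ∀ x, Ruelle J (fun _ => 1) x = 1

def IsGibbs {d : ℕ} (J : Omega d → ℝ) (μ : Measure (Omega d)) : Prop :=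
  IsProbabilityMeasure μ ∧
    ∀ f : Omega d → ℝ, Continuous f → ∫ x, Ruelle J f x ∂μ = ∫ x, f x ∂μ

def Cyl (w : List (Fin 2)) : Set (Omega 2) := {x | ∀ i, i < w.length → x i = w.getD i 0}

def Sh (y : Omega 2) : Omega 2 := cons 0 (shift y)

def lexIdx (n : ℕ) (y : Omega 2) : ℕ := ∑ i ∈ Finset.range n, (y i).val * 2 ^ (n - 1 - i)

noncomputable def alphaFun (n : ℕ) (y : Omega 2) : ℝ := if lexIdx n y % 2 = 0 then -1 else 1

noncomputable def betaFun (n : ℕ) (y : Omega 2) : ℝ :=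
  if n = 1 then (if y 0 = 0 then 1 else -1)
  else if y 0 = 0 then alphaFun n y else -alphaFun n (Sh y)

/-! ### Auxiliary definitions and lemmas -/

/-- sign of a bit -/
def sg (a : Fin 2) : ℝ := if a = 0 then 1 else -1

lemma fin2_cases (a : Fin 2) : a = 0 ∨ a = 1 := by omega

lemma sg_zero : sg 0 = 1 := rfl
lemma sg_one : sg 1 = -1 := by norm_num [sg]

lemma beta_one (y : Omega 2) : betaFun 1 y = sg (y 0) := by
  simp [betaFun, sg]

lemma lex_mod (n : ℕ) (hn : 1 ≤ n) (y : Omega 2) : lexIdx n y % 2 = (y (n - 1)).val := by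
  obtain ⟨k, rfl⟩ : ∃ k, n = k + 1 := ⟨n - 1, by omega⟩
  unfold lexIdx
  rw [Finset.sum_range_succ]
  simp only [Nat.add_sub_cancel, Nat.sub_self, pow_zero, mul_one]
  have h0 : 2 ∣ ∑ i ∈ Finset.range k, (y i).val * 2 ^ (k - i) := by
    refine Finset.dvd_sum fun i hi => Dvd.dvd.mul_left ?_ _
    exact dvd_pow_self 2 (by simp at hi; omega)
  have h1 := (y k).isLt
  omega

lemma alpha_eq (n : ℕ) (hn : 1 ≤ n) (y : Omega 2) : alphaFun n y = -sg (y (n - 1)) := by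
  unfold alphaFun
  rw [lex_mod n hn]
  rcases fin2_cases (y (n - 1)) with h | h <;> simp [h, sg]

lemma beta_two (n : ℕ) (hn : 2 ≤ n) (y : Omega 2) :
    betaFun n y = -(sg (y 0) * sg (y (n - 1))) := by
  unfold betaFun
  rw [if_neg (by omega)]
  by_cases h0 : y 0 = 0
  · rw [if_pos h0, alpha_eq n (by omega)]
    simp [h0, sg]
  · rw [if_neg h0, alpha_eq n (by omega)]
    have hS : Sh y (n - 1) = y (n - 1) := by
      obtain ⟨k, hk⟩ : ∃ k, n - 1 = k + 1 := ⟨n - 2, by omega⟩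
      rw [hk]; rfl
    rw [hS]
    have h1 : y 0 = 1 := by rcases fin2_cases (y 0) with h | h <;> simp_all
    simp only [sg, h1]
    rcases fin2_cases (y (n - 1)) with h2 | h2 <;> simp [h2] <;> norm_num

/-- extension of a finite word by zeros -/
def ext (N : ℕ) (v : Fin N → Fin 2) : Omega 2 := fun i => if h : i < N then v ⟨i, h⟩ else 0

lemma getD_ofFn {N : ℕ} (v : Fin N → Fin 2) (i : ℕ) (hi : i < N) :
    (List.ofFn v).getD i 0 = v ⟨i, hi⟩ := by
  rw [List.getD_eq_getElem _ _ (by simpa using hi)]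
  simp

lemma measurable_cyl (w : List (Fin 2)) : MeasurableSet (Cyl w) := by
  have : Cyl w = ⋂ i ∈ Finset.range w.length, (fun x : Omega 2 => x i) ⁻¹' {w.getD i 0} := by
    ext x
    simp [Cyl]
  rw [this]
  exact MeasurableSet.biInter (Finset.range _).countable_toSet
    (fun i _ => measurable_pi_apply i (measurableSet_singleton _))

lemma integral_eq_sum (μ : Measure (Omega 2)) [IsProbabilityMeasure μ]
    (hμ : ∀ w : List (Fin 2), (μ (Cyl w)).toReal = (1 / 2) ^ w.length)
    (N : ℕ) (f : Omega 2 → ℝ)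
    (hf : ∀ y z : Omega 2, (∀ i, i < N → y i = z i) → f y = f z) :
    ∫ y, f y ∂μ = ∑ v : Fin N → Fin 2, f (ext N v) * (1 / 2) ^ N := by
  have hfy : ∀ y : Omega 2,
      f y = ∑ v : Fin N → Fin 2,
        Set.indicator (Cyl (List.ofFn v)) (fun _ => f (ext N v)) y := by
    intro y
    rw [Finset.sum_eq_single (fun i : Fin N => y i)]
    · rw [Set.indicator_of_mem]
      · exact hf _ _ (fun i hi => by simp [ext, hi])
      · intro i hi
        rw [getD_ofFn _ i (by simpa using hi)]
    · intro v _ hv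
      rw [Set.indicator_of_notMem]
      intro hy
      apply hv
      funext i
      have := hy i.val (by simp)
      rw [getD_ofFn _ i.val i.isLt] at this
      exact this.symm
    · simp
  rw [integral_congr_ae (Eventually.of_forall hfy),
    integral_finset_sum _ (fun v _ => (integrable_const _).indicator (measurable_cyl _))]
  refine Finset.sum_congr rfl fun v _ => ?_
  rw [integral_indicator_const _ (measurable_cyl _), measureReal_def, hμ, List.length_ofFn, smul_eq_mul, mul_comm]

lemma sum_mul_sg {N : ℕ} (j : Fin N) (G : (Fin N → Fin 2) → ℝ)
    (hG : ∀ v a, G (Function.update v j a) = G v) :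
    ∑ v : Fin N → Fin 2, G v * sg (v j) = 0 := by
  classical
  refine Finset.sum_ninvolution (fun v => Function.update v j (v j + 1)) ?_ ?_ (fun _ => Finset.mem_univ _) ?_
  · intro v
    show G v * sg (v j) + G (Function.update v j (v j + 1)) * sg (Function.update v j (v j + 1) j) = 0
    rw [hG, Function.update_self]
    rcases fin2_cases (v j) with h | h <;> simp [h, sg] <;> ring
  · intro v _
    intro h
    have : Function.update v j (v j + 1) = v := h
    have h2 := congrFun this j
    rw [Function.update_self] at h2
    rcases fin2_cases (v j) with h' | h' <;> rw [h'] at h2 <;> exact absurd h2 (by decide)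
  · intro v
    show Function.update (Function.update v j (v j + 1)) j ((Function.update v j (v j + 1)) j + 1) = v
    funext k
    by_cases hk : k = j
    · subst hk
      simp only [Function.update_self]
      rcases fin2_cases (v k) with h | h <;> rw [h] <;> decide
    · simp [Function.update_of_ne hk]

lemma ext_lt {N : ℕ} (v : Fin N → Fin 2) (i : ℕ) (hi : i < N) : ext N v i = v ⟨i, hi⟩ :=
  dif_pos hi

theorem beta_kernel_orthonormal (μ : Measure (Omega 2)) (hprob : IsProbabilityMeasure μ)
    (hμ : ∀ w : List (Fin 2), (μ (Cyl w)).toReal = (1 / 2) ^ w.length) :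
    ∀ n : ℕ, 1 ≤ n →
      (∀ x : Omega 2, Ruelle (fun _ => (1 : ℝ) / 2) (betaFun n) x = 0) ∧
        (∫ y, (betaFun n y) ^ 2 ∂μ = 1) ∧
          ∀ m : ℕ, 1 ≤ m → n ≠ m → ∫ y, betaFun n y * betaFun m y ∂μ = 0 := by
  haveI := hprob
  have hdep : ∀ k, 1 ≤ k → ∀ y z : Omega 2, y 0 = z 0 → y (k - 1) = z (k - 1) →
      betaFun k y = betaFun k z := by
    intro k hk y z h0 h1
    by_cases hk2 : k = 1
    · subst hk2; rw [beta_one, beta_one, h0]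
    · rw [beta_two k (by omega), beta_two k (by omega), h0, h1]
  have orth : ∀ n m : ℕ, 1 ≤ n → n < m → ∫ y, betaFun n y * betaFun m y ∂μ = 0 := by
    intro n m hn hnm
    have hm2 : 2 ≤ m := by omega
    have jm : m - 1 < m := by omega
    have j0 : 0 < m := by omega
    rw [integral_eq_sum μ hμ m _ (fun y z h => by
      rw [hdep n hn y z (h 0 (by omega)) (h (n - 1) (by omega)),
          hdep m (by omega) y z (h 0 (by omega)) (h (m - 1) (by omega))])]
    rw [← Finset.sum_mul]
    apply mul_eq_zero_of_left
    have key : ∀ v : Fin m → Fin 2,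
        betaFun n (ext m v) * betaFun m (ext m v)
          = (betaFun n (ext m v) * -sg (v ⟨0, j0⟩)) * sg (v ⟨m - 1, jm⟩) := by
      intro v
      rw [beta_two m hm2, ext_lt v 0 j0, ext_lt v (m - 1) jm]
      ring
    rw [Finset.sum_congr rfl (fun v _ => key v)]
    have h0ne : (⟨0, j0⟩ : Fin m) ≠ ⟨m - 1, jm⟩ := by
      intro h
      have := Fin.val_eq_of_eq h
      simp at this
      omega
    refine sum_mul_sg ⟨m - 1, jm⟩ (fun v => betaFun n (ext m v) * -sg (v ⟨0, j0⟩)) ?_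
    intro v a
    have hnne : (⟨n - 1, by omega⟩ : Fin m) ≠ ⟨m - 1, jm⟩ := by
      intro h
      have := Fin.val_eq_of_eq h
      simp at this
      omega
    show betaFun n (ext m (Function.update v ⟨m - 1, jm⟩ a)) *
        -sg ((Function.update v ⟨m - 1, jm⟩ a) ⟨0, j0⟩)
      = betaFun n (ext m v) * -sg (v ⟨0, j0⟩)
    rw [Function.update_of_ne h0ne]
    congr 1
    apply hdep n hn
    · rw [ext_lt _ 0 j0, ext_lt _ 0 j0, Function.update_of_ne h0ne]
    · rw [ext_lt _ (n - 1) (by omega), ext_lt _ (n - 1) (by omega),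
        Function.update_of_ne hnne]
  intro n hn
  refine ⟨?_, ?_, ?_⟩
  · intro x
    have hR : Ruelle (fun _ => (1 : ℝ) / 2) (betaFun n) x
        = 1 / 2 * betaFun n (cons 0 x) + 1 / 2 * betaFun n (cons 1 x) := by
      simp [Ruelle, Fin.sum_univ_two]
    rw [hR]
    by_cases h1 : n = 1
    · subst h1
      rw [beta_one, beta_one]
      show 1 / 2 * sg 0 + 1 / 2 * sg 1 = 0
      norm_num [sg]
    · have h2 : 2 ≤ n := by omega
      rw [beta_two n h2, beta_two n h2]
      obtain ⟨k, hk⟩ : ∃ k, n - 1 = k + 1 := ⟨n - 2, by omega⟩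
      have ck : ∀ a : Fin 2, (cons a x) (n - 1) = x k := by
        intro a; rw [hk]; rfl
      rw [ck, ck]
      show 1 / 2 * -(sg 0 * sg (x k)) + 1 / 2 * -(sg 1 * sg (x k)) = 0
      rcases fin2_cases (x k) with h | h <;> norm_num [sg, h]
  · have hsq : ∀ y : Omega 2, (betaFun n y) ^ 2 = 1 := by
      intro y
      unfold betaFun alphaFun
      split_ifs <;> norm_num
    rw [integral_congr_ae (Eventually.of_forall hsq)]
    simp
  · intro m hm hne
    rcases lt_or_gt_of_ne hne with h | h
    · exact orth n m hn h
    · rw [integral_congr_ae (Eventually.of_forall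
        (fun y => mul_comm (betaFun n y) (betaFun m y)))]
      exact orth m n hm h
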